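/- Let g(x_2, z) = integral from -1 to 1 of f(x_1, x_2, z) dx_1, where f(x_1,x_2,z) = 1/((1 - z x_1 x_2) sqrt(1-x_1^2) sqrt(1-x_2^2)). Then (x_2^2 z^2 - 1) * dg/dz + x_2^2 z * g = 0 for |x_2| < 1 and |z| < 1. -/

import Mathlib

/-- The integrand `f(x₁,x₂,z) = 1/((1-zx₁x₂)√(1-x₁²)√(1-x₂²))`. -/
noncomputable def fcc2Integrand (x₁ x₂ z : ℝ) : ℝ :=
  1 / ((1 - z * x₁ * x₂) * Real.sqrt (1 - x₁ ^ 2) * Real.sqrt (1 - x₂ ^ 2))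

/-- The inner integral `g(x₂,z) = ∫_{-1}^{1} f(x₁,x₂,z) dx₁`. -/
noncomputable def innerInt (x₂ z : ℝ) : ℝ :=
  ∫ x₁ in (-1:ℝ)..1, fcc2Integrand x₁ x₂ z

open Real MeasureTheory intervalIntegral Set

lemma one_sub_mul_pos' {a x : ℝ} (ha : |a| < 1) (hx : |x| ≤ 1) : 0 < 1 - a * x := by
  have h : |a * x| < 1 := by
    rw [abs_mul]
    calc |a| * |x| ≤ |a| * 1 := by nlinarith [abs_nonneg a]
    _ < 1 := by simpa using ha
  linarith [(abs_lt.1 h).2]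

lemma key_int (a : ℝ) (ha : |a| < 1) :
    IntervalIntegrable (fun x => 1 / ((1 - a * x) * Real.sqrt (1 - x ^ 2))) volume (-1) 1 ∧
    ∫ x in (-1:ℝ)..1, 1 / ((1 - a * x) * Real.sqrt (1 - x ^ 2)) = π / Real.sqrt (1 - a ^ 2) := by
  have ha2 : (0:ℝ) < 1 - a ^ 2 := by nlinarith [sq_abs a, abs_nonneg a]
  set F : ℝ → ℝ := fun x => 1 / ((1 - a * x) * Real.sqrt (1 - x ^ 2)) with hF
  -- image of cos
  have himg : Real.cos '' (Ioo 0 π) = Ioo (-1:ℝ) 1 := by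
    apply Subset.antisymm
    · rintro _ ⟨θ, hθ, rfl⟩
      constructor
      · have := Real.strictAntiOn_cos
          ⟨hθ.1.le, hθ.2.le⟩ ⟨le_of_lt Real.pi_pos, le_refl π⟩ hθ.2
        simpa [Real.cos_pi] using this
      · have := Real.strictAntiOn_cos
          ⟨le_refl 0, Real.pi_pos.le⟩ ⟨hθ.1.le, hθ.2.le⟩ hθ.1
        simpa using this
    · rintro y hy
      refine ⟨Real.arccos y, ⟨?_, ?_⟩, Real.cos_arccos hy.1.le hy.2.le⟩
      · exact Real.arccos_pos.2 hy.2
      · rcases lt_or_eq_of_le (Real.arccos_le_pi y) with h | h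
        · exact h
        · exfalso
          have := Real.cos_arccos hy.1.le hy.2.le
          rw [h, Real.cos_pi] at this
          linarith [hy.1]
  have hderivcos : ∀ θ ∈ Ioo 0 π, HasDerivWithinAt Real.cos (-Real.sin θ) (Ioo 0 π) θ :=
    fun θ _ => (Real.hasDerivAt_cos θ).hasDerivWithinAt
  have hinj : InjOn Real.cos (Ioo 0 π) := Real.injOn_cos.mono Ioo_subset_Icc_self
  have hiff := integrableOn_image_iff_integrableOn_abs_deriv_smul measurableSet_Ioo hderivcos hinj F
  rw [himg] at hiff
  have hcont : Continuous (fun θ : ℝ => 1 / (1 - a * Real.cos θ)) := by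
    apply Continuous.div continuous_const (by continuity)
    intro θ; exact (one_sub_mul_pos' ha (Real.abs_cos_le_one θ)).ne'
  have heq : ∀ θ ∈ Ioo 0 π, (1:ℝ) / (1 - a * Real.cos θ) = |(-Real.sin θ)| • F (Real.cos θ) := by
    intro θ hθ
    have hs : 0 < Real.sin θ := Real.sin_pos_of_pos_of_lt_pi hθ.1 hθ.2
    have hsq : Real.sqrt (1 - Real.cos θ ^ 2) = Real.sin θ := by
      rw [show (1:ℝ) - Real.cos θ ^ 2 = Real.sin θ ^ 2 by
        nlinarith [Real.sin_sq_add_cos_sq θ]]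
      exact Real.sqrt_sq hs.le
    have hd : 0 < 1 - a * Real.cos θ := one_sub_mul_pos' ha (Real.abs_cos_le_one θ)
    rw [hF]
    simp only [smul_eq_mul, abs_neg, abs_of_pos hs, hsq]
    field_simp
  have hint2 : IntegrableOn (fun θ => |(-Real.sin θ)| • F (Real.cos θ)) (Ioo 0 π) := by
    refine Integrable.congr ((hcont.integrableOn_Icc (a := 0) (b := π)).mono_set
      Ioo_subset_Icc_self) ?_
    exact (ae_restrict_mem measurableSet_Ioo).mono fun θ hθ => heq θ hθ
  have hFint : IntervalIntegrable F volume (-1) 1 := by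
    rw [intervalIntegrable_iff_integrableOn_Ioo_of_le (by norm_num)]
    exact hiff.2 hint2
  refine ⟨hFint, ?_⟩
  -- FTC with antiderivative arcsin ((x-a)/(1-ax))
  set G : ℝ → ℝ := fun x => Real.arcsin ((x - a) / (1 - a * x)) with hG
  have hGderiv : ∀ x ∈ Ioo (-1:ℝ) 1, HasDerivAt G (Real.sqrt (1 - a ^ 2) * F x) x := by
    intro x hx
    have hx1 : 0 < 1 - a * x := one_sub_mul_pos' ha (abs_le.2 ⟨hx.1.le, hx.2.le⟩)
    have hx2 : (0:ℝ) < 1 - x ^ 2 := by nlinarith [hx.1, hx.2]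
    have hu : HasDerivAt (fun x => (x - a) / (1 - a * x)) ((1 - a ^ 2) / (1 - a * x) ^ 2) x := by
      have h1 : HasDerivAt (fun x : ℝ => x - a) 1 x := (hasDerivAt_id x).sub_const a
      have h2 : HasDerivAt (fun x : ℝ => 1 - a * x) (-a) x := by
        simpa using ((hasDerivAt_id x).const_mul a).const_sub 1
      have := h1.div h2 hx1.ne'
      refine this.congr_deriv ?_
      field_simp
      ring
    set u : ℝ := (x - a) / (1 - a * x) with hu'
    have hkey : (1 - a * x) ^ 2 - (x - a) ^ 2 = (1 - a ^ 2) * (1 - x ^ 2) := by ring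
    have hu2 : u ^ 2 < 1 := by
      rw [hu', div_pow, div_lt_one (by positivity)]
      nlinarith
    have hune1 : u ≠ 1 := by intro h; rw [h] at hu2; norm_num at hu2
    have hunem1 : u ≠ -1 := by intro h; rw [h] at hu2; norm_num at hu2
    have harc := (Real.hasDerivAt_arcsin hunem1 hune1).comp x hu
    refine harc.congr_deriv (Eq.symm ?_)
    have h1u : (1:ℝ) - u ^ 2 = (1 - a ^ 2) * (1 - x ^ 2) / (1 - a * x) ^ 2 := by
      rw [hu', div_pow]
      have hx1' : 1 - x * a ≠ 0 := by rw [mul_comm]; exact hx1.ne'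
      field_simp
      linarith [hkey]
    have hsqrtu : Real.sqrt (1 - u ^ 2)
        = Real.sqrt (1 - a ^ 2) * Real.sqrt (1 - x ^ 2) / (1 - a * x) := by
      rw [h1u, Real.sqrt_div (by positivity) _, Real.sqrt_mul ha2.le, Real.sqrt_sq hx1.le]
    rw [hF, hsqrtu]
    have sa : 0 < Real.sqrt (1 - a ^ 2) := Real.sqrt_pos.2 ha2
    have sx : 0 < Real.sqrt (1 - x ^ 2) := Real.sqrt_pos.2 hx2
    field_simp
    linear_combination Real.mul_self_sqrt ha2.le
  have hcontG : ContinuousOn G (Icc (-1:ℝ) 1) := by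
    apply Real.continuous_arcsin.comp_continuousOn
    apply ContinuousOn.div (by fun_prop) (by fun_prop)
    intro x hx
    exact (one_sub_mul_pos' ha (abs_le.2 ⟨hx.1, hx.2⟩)).ne'
  have hFint' : IntervalIntegrable (fun x => Real.sqrt (1 - a ^ 2) * F x) volume (-1) 1 :=
    hFint.const_mul _
  have hftc := intervalIntegral.integral_eq_sub_of_hasDeriv_right_of_le (by norm_num)
    hcontG (fun x hx => (hGderiv x hx).hasDerivWithinAt) hFint'
  have ham : (0:ℝ) < 1 - a := by linarith [(abs_lt.1 ha).2]
  have hap : (0:ℝ) < 1 + a := by linarith [(abs_lt.1 ha).1]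
  have hG1 : G 1 = π / 2 := by
    show Real.arcsin ((1 - a) / (1 - a * 1)) = π / 2
    rw [show ((1:ℝ) - a) / (1 - a * 1) = 1 by rw [mul_one]; field_simp, Real.arcsin_one]
  have hGm1 : G (-1) = -(π / 2) := by
    show Real.arcsin ((-1 - a) / (1 - a * (-1))) = -(π / 2)
    rw [show ((-1:ℝ) - a) / (1 - a * (-1)) = -1 by rw [show (1:ℝ) - a * (-1) = 1 + a by ring]; field_simp; ring, Real.arcsin_neg_one]
  rw [hG1, hGm1, intervalIntegral.integral_const_mul] at hftc
  have sa : 0 < Real.sqrt (1 - a ^ 2) := Real.sqrt_pos.2 ha2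
  rw [eq_div_iff sa.ne']
  rw [hF] at hftc ⊢
  linarith [hftc]

lemma innerInt_closed (x₂ : ℝ) (hx₂ : |x₂| < 1) {t : ℝ} (ht : |t| < 1) :
    innerInt x₂ t = (Real.sqrt (1 - x₂ ^ 2 * t ^ 2))⁻¹ * (π / Real.sqrt (1 - x₂ ^ 2)) := by
  have ha : |t * x₂| < 1 := by
    rw [abs_mul]
    nlinarith [abs_nonneg t, abs_nonneg x₂]
  have hval := (key_int (t * x₂) ha).2
  have hfun : ∀ x₁ : ℝ, fcc2Integrand x₁ x₂ t
      = (1 / ((1 - (t * x₂) * x₁) * Real.sqrt (1 - x₁ ^ 2))) * (1 / Real.sqrt (1 - x₂ ^ 2)) := by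
    intro x₁
    unfold fcc2Integrand
    rw [div_mul_div_comm, one_mul]
    ring_nf
  have : innerInt x₂ t
      = (∫ x₁ in (-1:ℝ)..1, 1 / ((1 - (t * x₂) * x₁) * Real.sqrt (1 - x₁ ^ 2)))
        * (1 / Real.sqrt (1 - x₂ ^ 2)) := by
    rw [innerInt, ← intervalIntegral.integral_mul_const]
    exact intervalIntegral.integral_congr fun x _ => hfun x
  rw [this, hval, show ((1:ℝ) - (t * x₂) ^ 2) = 1 - x₂ ^ 2 * t ^ 2 by ring]
  ring

/-- The telescoped ODE for the inner integral:
`(x₂²z² - 1) ∂g/∂z + x₂²z · g = 0` for `|x₂| < 1`, `|z| < 1`. -/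
theorem innerInt_ode (x₂ z : ℝ) (hx₂ : |x₂| < 1) (hz : |z| < 1) :
    (x₂ ^ 2 * z ^ 2 - 1) * deriv (fun t => innerInt x₂ t) z +
      x₂ ^ 2 * z * innerInt x₂ z = 0 := by
  have h1 : x₂ ^ 2 < 1 := by nlinarith [sq_abs x₂, abs_nonneg x₂]
  have h2 : z ^ 2 < 1 := by nlinarith [sq_abs z, abs_nonneg z]
  have hu : (0:ℝ) < 1 - x₂ ^ 2 * z ^ 2 := by nlinarith [sq_nonneg x₂, sq_nonneg z]
  set C : ℝ := π / Real.sqrt (1 - x₂ ^ 2) with hC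
  set h : ℝ → ℝ := fun t => (Real.sqrt (1 - x₂ ^ 2 * t ^ 2))⁻¹ * C with hh
  have hev : (fun t => innerInt x₂ t) =ᶠ[nhds z] h := by
    have hop : ∀ᶠ t in nhds z, t ∈ Ioo (-1:ℝ) 1 :=
      isOpen_Ioo.eventually_mem (by constructor <;> [linarith [(abs_lt.1 hz).1]; linarith [(abs_lt.1 hz).2]])
    exact hop.mono fun t htm => innerInt_closed x₂ hx₂ (abs_lt.2 ⟨htm.1, htm.2⟩)
  set s : ℝ := Real.sqrt (1 - x₂ ^ 2 * z ^ 2) with hs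
  have hspos : 0 < s := Real.sqrt_pos.2 hu
  have hs2 : s ^ 2 = 1 - x₂ ^ 2 * z ^ 2 := Real.sq_sqrt hu.le
  have hq : HasDerivAt (fun t : ℝ => 1 - x₂ ^ 2 * t ^ 2) (-(x₂ ^ 2 * (2 * z ^ 1))) z := by
    simpa using ((hasDerivAt_pow 2 z).const_mul (x₂ ^ 2)).const_sub 1
  have hsq : HasDerivAt (fun t : ℝ => Real.sqrt (1 - x₂ ^ 2 * t ^ 2))
      (1 / (2 * s) * (-(x₂ ^ 2 * (2 * z ^ 1)))) z :=
    (Real.hasDerivAt_sqrt hu.ne').comp z hq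
  have hinv := hsq.inv hspos.ne'
  have hD := hinv.mul_const C
  have hder : deriv (fun t => innerInt x₂ t) z
      = -(1 / (2 * s) * -(x₂ ^ 2 * (2 * z ^ 1))) / s ^ 2 * C := by
    rw [Filter.EventuallyEq.deriv_eq hev]
    exact hD.deriv
  rw [hder, innerInt_closed x₂ hx₂ hz, ← hs, ← hC]
  rw [show x₂ ^ 2 * z ^ 2 - 1 = -s ^ 2 by rw [hs2]; ring]
  field_simp
  ring
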